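/- Fix a real number p with 0 < p < (1/3)·(1 − 8/(1 + 3√57)^{1/3} + (1 + 3√57)^{1/3}) (the root of 2p² = (1−p)³, approximately 0.361) and let (φ, ĝ) be a potential for the immediate-release game. Then (0,2) is not a mining state of φ, i.e., φ(0,2) > p·φ(1,2) + (1−p)·φ(0,3) − (1−p)·ĝ. -/

import Mathlib

/-- A potential for the immediate-release bitcoin mining game, for a strategic
miner of relative computational power `p` playing against honest FRONTIER
miners of collective power `1 − p`.  It consists of a potential function
`φ a b` (the miner's advantage for being at the state where his branch has
length `a` and the honest branch has length `b`; meaningful for `a ≤ b + 1`)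
and the optimal expected gain per level `gain`, satisfying: `φ 0 0 = 0`;
`φ ≥ 0` on states; `gain ≥ p`; the winning-state equation
`φ (b+1) b = φ 0 0 + (b+1) − gain`; the Bellman equation for `a ≤ b`,
`φ a b = max (max_{0 ≤ s < b} φ 0 s)
             (p·φ (a+1) b + (1−p)·φ a (b+1) − (1−p)·gain)`
(where the maximum over `s` is omitted when `b = 0`); monotonicity of `φ a b`
in `a`; and the shift bound
`φ (a+c) (b+c) ≤ φ a b + c·(p/(1−p))^(1+b−a)`. -/
structure MiningPotential (p : ℝ) where
  φ : ℕ → ℕ → ℝ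
  gain : ℝ
  zero : φ 0 0 = 0
  nonneg : ∀ a b : ℕ, a ≤ b + 1 → 0 ≤ φ a b
  gain_ge : p ≤ gain
  win : ∀ b : ℕ, φ (b + 1) b = φ 0 0 + (b + 1) - gain
  bellman : ∀ a b : ℕ, a ≤ b →
    φ a b = ((List.range b).map (fun s => φ 0 s)).foldr max
      (p * φ (a + 1) b + (1 - p) * φ a (b + 1) - (1 - p) * gain)
  mono : ∀ a b : ℕ, a ≤ b → φ a b ≤ φ (a + 1) b
  shift : ∀ a b c : ℕ, a ≤ b + 1 →
    φ (a + c) (b + c) ≤ φ a b + (c : ℝ) * (p / (1 - p)) ^ (1 + b - a)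

/-- A state `(a, b)` with `a ≤ b` is a mining state of the potential `P` if at
`(a, b)` the Bellman maximum is attained by continuing to mine. -/
def MiningPotential.IsMiningState {p : ℝ} (P : MiningPotential p) (a b : ℕ) : Prop :=
  a ≤ b ∧
    P.φ a b = p * P.φ (a + 1) b + (1 - p) * P.φ a (b + 1) - (1 - p) * P.gain

/-- For any potential `(φ, ĝ)` of the immediate-release game with
`0 < p < (1/3)·(1 − 8/(1 + 3√57)^{1/3} + (1 + 3√57)^{1/3})` (the root of
`2p² = (1−p)³`, ≈ 0.361): the state `(0,2)` is not a mining state of `φ`,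
i.e. `φ(0,2) > p·φ(1,2) + (1−p)·φ(0,3) − (1−p)·ĝ`. -/
theorem zero_two_not_mining {p : ℝ} (hp0 : 0 < p)
    (hp : p < (1 / 3) * (1 - 8 / (1 + 3 * Real.sqrt 57) ^ ((1 : ℝ) / 3)
        + (1 + 3 * Real.sqrt 57) ^ ((1 : ℝ) / 3)))
    (P : MiningPotential p) :
    P.φ 0 2 > p * P.φ 1 2 + (1 - p) * P.φ 0 3 - (1 - p) * P.gain := by
  
  -- Step 1: the hypothesis on `p` implies `2 p² < (1 − p)³`.
  have hkey : 2 * p ^ 2 < (1 - p) ^ 3 := by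
    set s := Real.sqrt 57 with hsdef
    have hs : s ^ 2 = 57 := Real.sq_sqrt (by norm_num)
    have hs0 : 0 < s := Real.sqrt_pos.mpr (by norm_num)
    set c := (1 + 3 * s) ^ ((1 : ℝ) / 3) with hcdef
    have hcpos : 0 < c := Real.rpow_pos_of_pos (by positivity) _
    have hc3 : c ^ 3 = 1 + 3 * s := by
      rw [hcdef, show ((1 + 3*s) ^ ((1:ℝ)/3)) ^ 3 = ((1 + 3*s) ^ ((1:ℝ)/3)) ^ (3:ℕ) from rfl,
        ← Real.rpow_natCast ((1 + 3*s) ^ ((1:ℝ)/3)) 3, ← Real.rpow_mul (by positivity)]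
      norm_num
    have hcne : c ≠ 0 := ne_of_gt hcpos
    have hu : (c - 8 / c) ^ 3 + 24 * (c - 8 / c) = 2 := by
      have hc6 : c ^ 6 = (1 + 3 * s) ^ 2 := by rw [← hc3]; ring
      field_simp
      linear_combination hc6 + 9 * hs - 2 * hc3
    set R := (1 / 3) * (1 - 8 / c + c) with hRdef
    have hroot : (1 - R) ^ 3 = 2 * R ^ 2 := by
      rw [hRdef]; linear_combination (-1/27 : ℝ) * hu
    have hA : 0 ≤ (1-p)^2 + (1-p)*(1-R) + (1-R)^2 := by
      nlinarith [sq_nonneg ((1-p)+(1-R)), sq_nonneg (1-p), sq_nonneg (1-R)]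
    have hfp : (1-p)^3 - 2*p^2 = ((1-R)^3 - 2*R^2)
        + (R - p)*((1-p)^2+(1-p)*(1-R)+(1-R)^2) + 2*(R-p)*(R+p) := by ring
    have h1 : 0 < R - p := sub_pos.mpr hp
    have h2 : 0 ≤ (R-p)*((1-p)^2+(1-p)*(1-R)+(1-R)^2) := mul_nonneg h1.le hA
    have hR0 : 0 < R := hp0.trans hp
    have h3 : 0 < 2*(R-p)*(R+p) := by positivity
    linarith [hroot, hfp]
  -- Step 2: combine the potential axioms.
  have h1p : 0 < 1 - p := by nlinarith [sq_nonneg (1 - p)]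
  set q := p / (1 - p) with hqdef
  have hq0 : 0 < q := div_pos hp0 h1p
  have hqe : q * (1 - p) = p := div_mul_cancel₀ _ (ne_of_gt h1p)
  -- φ(0,1) ≤ φ(0,2)
  have hb := P.bellman 0 2 (by norm_num)
  have f1 : P.φ 0 1 ≤ P.φ 0 2 := by
    rw [hb]
    simp [List.range_succ]
  -- φ(1,2) ≤ φ(0,1) + q²
  have f2 : P.φ 1 2 ≤ P.φ 0 1 + q ^ 2 := by
    have h := P.shift 0 1 1 (by norm_num)
    norm_num at h
    exact h
  -- φ(0,3) ≤ φ(1,3) ≤ φ(0,2) + q³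
  have f3 : P.φ 0 3 ≤ P.φ 1 3 := P.mono 0 3 (by norm_num)
  have f4 : P.φ 1 3 ≤ P.φ 0 2 + q ^ 3 := by
    have h := P.shift 0 2 1 (by norm_num)
    norm_num at h
    exact h
  have f5 : p ≤ P.gain := P.gain_ge
  -- key: p q² + (1−p) q³ < (1−p) p  (equivalent to 2p² < (1−p)³)
  have e2 : q ^ 2 * (1 - p) ^ 2 = p ^ 2 := by rw [← mul_pow, hqe]
  have e3 : q ^ 3 * (1 - p) ^ 3 = p ^ 3 := by rw [← mul_pow, hqe]
  have key : p * q ^ 2 + (1 - p) * q ^ 3 < (1 - p) * p := by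
    have h4 : (0:ℝ) < (1 - p) ^ 3 := by positivity
    refine lt_of_mul_lt_mul_right ?_ h4.le
    have lhs_eq : (p * q ^ 2 + (1 - p) * q ^ 3) * (1 - p) ^ 3 = 2 * p ^ 3 * (1 - p) := by
      linear_combination (p * (1 - p)) * e2 + (1 - p) * e3
    rw [lhs_eq]
    nlinarith [mul_pos (mul_pos hp0 h1p) (sub_pos.mpr hkey)]
  have m1 : p * P.φ 1 2 ≤ p * (P.φ 0 2 + q ^ 2) :=
    mul_le_mul_of_nonneg_left (f2.trans (by linarith)) hp0.le
  have m2 : (1 - p) * P.φ 0 3 ≤ (1 - p) * (P.φ 0 2 + q ^ 3) :=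
    mul_le_mul_of_nonneg_left (f3.trans f4) h1p.le
  have m3 : (1 - p) * p ≤ (1 - p) * P.gain := mul_le_mul_of_nonneg_left f5 h1p.le
  nlinarith [m1, m2, m3, key]
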